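/- arXiv:2508.01834 — 3 statements merged into one kernel-verified Lean document; each statement's English description precedes it below -/
import Mathlib

section
/- Let d ≥ 1, fix l ∈ {1, …, d}, let L_j < U_j, a_j ∈ ℝ, θ_j > 0 and w_j ≥ 0 for each j, and fix x_l ∈ ℝ. Then ∫_{∏_{j ≠ l} [L_j, U_j]} ∑_{k=1}^d w_k exp(−(x_k − a_k)²/θ_k²) dx_{−l} = w_l exp(−(x_l − a_l)²/θ_l²) · ∏_{j ≠ l} (U_j − L_j) + √π · ∑_{k ≠ l} w_k θ_k (Φ_k(U_k) − Φ_k(L_k)) · ∏_{j ≠ l, j ≠ k} (U_j − L_j), where Φ_k denotes the cumulative distribution function of the Gaussian distribution with mean a_k and variance θ_k²/2, and the integral is with respect to Lebesgue measure on ∏_{j ≠ l} [L_j, U_j]. -/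
open MeasureTheory

noncomputable def gaussCDF (a s t : ℝ) : ℝ :=
  ∫ x in Set.Iic t, (Real.sqrt (2 * Real.pi * s))⁻¹ * Real.exp (-(x - a) ^ 2 / (2 * s))

lemma integral_pi_prod_aux {ι : Type*} [Fintype ι] (μ : ι → Measure ℝ)
    [∀ i, SigmaFinite (μ i)] (f : ι → ℝ → ℝ) :
    ∫ x : ι → ℝ, ∏ i, f i (x i) ∂(Measure.pi μ) = ∏ i, ∫ x, f i x ∂(μ i) :=
  MeasureTheory.integral_fintype_prod_eq_prod (E := fun _ => ℝ) f (μ := μ)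

lemma gauss_integrable (aa th : ℝ) (hth : 0 < th) :
    Integrable (fun x => Real.exp (-(x - aa) ^ 2 / th ^ 2)) := by
  have hb : (0:ℝ) < (th ^ 2)⁻¹ := by positivity
  have h := (integrable_exp_neg_mul_sq hb).comp_sub_right aa
  have heq : (fun x => Real.exp (-(th ^ 2)⁻¹ * (x - aa) ^ 2))
      = fun x => Real.exp (-(x - aa) ^ 2 / th ^ 2) := by
    funext x; rw [neg_mul, neg_div, div_eq_inv_mul]
  rwa [heq] at h

lemma gauss_icc (aa th Lk Uk : ℝ) (hth : 0 < th) (hLU : Lk ≤ Uk) :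
    ∫ x in Set.Icc Lk Uk, Real.exp (-(x - aa) ^ 2 / th ^ 2)
      = Real.sqrt Real.pi * th
        * (gaussCDF aa (th ^ 2 / 2) Uk - gaussCDF aa (th ^ 2 / 2) Lk) := by
  have hc : Real.sqrt Real.pi * th ≠ 0 := by positivity
  have hd : ∀ t, gaussCDF aa (th ^ 2 / 2) t
      = (Real.sqrt Real.pi * th)⁻¹ * ∫ x in Set.Iic t, Real.exp (-(x - aa) ^ 2 / th ^ 2) := by
    intro t
    unfold gaussCDF
    have h1 : ∀ x : ℝ, (Real.sqrt (2 * Real.pi * (th ^ 2 / 2)))⁻¹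
        * Real.exp (-(x - aa) ^ 2 / (2 * (th ^ 2 / 2)))
        = (Real.sqrt Real.pi * th)⁻¹ * Real.exp (-(x - aa) ^ 2 / th ^ 2) := by
      intro x
      rw [show (2:ℝ) * (th ^ 2 / 2) = th ^ 2 by ring,
        show 2 * Real.pi * (th ^ 2 / 2) = Real.pi * th ^ 2 by ring,
        Real.sqrt_mul Real.pi_pos.le, Real.sqrt_sq hth.le]
    simp_rw [h1]
    exact MeasureTheory.integral_const_mul _ _
  have hint := gauss_integrable aa th hth
  rw [hd, hd, MeasureTheory.integral_Icc_eq_integral_Ioc,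
    ← intervalIntegral.integral_of_le hLU,
    ← intervalIntegral.integral_Iic_sub_Iic hint.integrableOn hint.integrableOn,
    mul_sub, ← mul_assoc, ← mul_assoc, mul_inv_cancel₀ hc, one_mul, one_mul]

lemma prod_subtype_ne {d : ℕ} (l : Fin d) (f : Fin d → ℝ) :
    ∏ j : {j : Fin d // j ≠ l}, f j.1 = ∏ j ∈ Finset.univ.erase l, f j :=
  (Finset.prod_subtype (Finset.univ.erase l) (by simp) f).symm

lemma prod_subtype_ne_erase {d : ℕ} {l k : Fin d} (hk : k ≠ l) (f : Fin d → ℝ)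
    (hf : f k ≠ 0) :
    ∏ j ∈ Finset.univ.erase (⟨k, hk⟩ : {j : Fin d // j ≠ l}), f j.1
      = ∏ j ∈ (Finset.univ.erase l).erase k, f j := by
  have h1 := Finset.prod_erase_mul Finset.univ
    (fun j : {j : Fin d // j ≠ l} => f j.1) (Finset.mem_univ ⟨k, hk⟩)
  have h2 := Finset.prod_erase_mul (Finset.univ.erase l) f
    (Finset.mem_erase.mpr ⟨hk, Finset.mem_univ k⟩)
  exact mul_right_cancel₀ hf (h1.trans ((prod_subtype_ne l f).trans h2.symm))

lemma restrict_pi_set {ι : Type*} [Fintype ι] (S : ι → Set ℝ) (hS : ∀ i, MeasurableSet (S i)) :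
    (volume : Measure (ι → ℝ)).restrict (Set.univ.pi S)
      = Measure.pi (fun i => volume.restrict (S i)) := by
  refine (Measure.pi_eq fun t ht => ?_).symm
  rw [Measure.restrict_apply (MeasurableSet.univ_pi ht), ← Set.pi_inter_distrib, volume_pi,
    Measure.pi_pi]
  exact Finset.prod_congr rfl fun i _ => (Measure.restrict_apply (ht i)).symm

/-- Marginalizing the additive squared-exponential kernel
`∑_k w_k exp(-(x_k - a_k)²/θ_k²)` over all coordinates except the `l`-th, over the rectangle
`∏_{j≠l} [L_j, U_j]`, gives
`w_l exp(-(x_l-a_l)²/θ_l²) ∏_{j≠l}(U_j-L_j)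
 + √π ∑_{k≠l} w_k θ_k (Φ_k(U_k) - Φ_k(L_k)) ∏_{j≠l,j≠k}(U_j-L_j)`,
where `Φ_k` is the CDF of the Gaussian with mean `a_k` and variance `θ_k²/2`. -/
theorem stmt10 (d : ℕ) (hd : 1 ≤ d) (l : Fin d) (L U a θ w : Fin d → ℝ)
    (hLU : ∀ j, L j < U j) (hθ : ∀ j, 0 < θ j) (hw : ∀ j, 0 ≤ w j) (xl : ℝ) :
    (∫ y in Set.univ.pi (fun j : {j : Fin d // j ≠ l} => Set.Icc (L j.1) (U j.1)),
        ∑ k : Fin d,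
          w k * Real.exp (-(((fun i => if hi : i = l then xl else y ⟨i, hi⟩) k) - a k) ^ 2
            / (θ k) ^ 2))
      = w l * Real.exp (-(xl - a l) ^ 2 / (θ l) ^ 2) *
            (∏ j ∈ Finset.univ.erase l, (U j - L j))
        + Real.sqrt Real.pi *
            ∑ k ∈ Finset.univ.erase l,
              w k * θ k * (gaussCDF (a k) ((θ k) ^ 2 / 2) (U k)
                  - gaussCDF (a k) ((θ k) ^ 2 / 2) (L k)) *
                ∏ j ∈ (Finset.univ.erase l).erase k, (U j - L j) := by
  classical
  have hUL : ∀ j, (0:ℝ) < U j - L j := fun j => sub_pos.mpr (hLU j)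
  set S : Set ({j : Fin d // j ≠ l} → ℝ) :=
    Set.univ.pi (fun j : {j : Fin d // j ≠ l} => Set.Icc (L j.1) (U j.1)) with hSdef
  have hcomp : IsCompact S := isCompact_univ_pi fun j => isCompact_Icc
  have hres : (volume : Measure ({j : Fin d // j ≠ l} → ℝ)).restrict S
      = Measure.pi (fun j : {j : Fin d // j ≠ l} => volume.restrict (Set.Icc (L j.1) (U j.1))) :=
    restrict_pi_set _ (fun j => measurableSet_Icc)
  have hvol : (volume S).toReal = ∏ j ∈ Finset.univ.erase l, (U j - L j) := by
    have h1 : ∀ j : {j : Fin d // j ≠ l},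
        (volume (Set.Icc (L j.1) (U j.1))).toReal = U j.1 - L j.1 := by
      intro j; rw [Real.volume_Icc, ENNReal.toReal_ofReal (hUL j.1).le]
    rw [hSdef, volume_pi, Measure.pi_pi, ENNReal.toReal_prod,
      Finset.prod_congr rfl fun j _ => h1 j]
    exact prod_subtype_ne l (fun j => U j - L j)
  have hint : ∀ k : Fin d, IntegrableOn
      (fun y : {j : Fin d // j ≠ l} → ℝ =>
        w k * Real.exp (-((if hi : k = l then xl else y ⟨k, hi⟩) - a k) ^ 2 / θ k ^ 2)) S := by
    intro k
    refine ContinuousOn.integrableOn_compact hcomp (Continuous.continuousOn ?_)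
    by_cases hk : k = l
    · simp only [dif_pos hk]; exact continuous_const
    · simp only [dif_neg hk]; fun_prop
  calc (∫ y in S, ∑ k : Fin d,
          w k * Real.exp (-(((fun i => if hi : i = l then xl else y ⟨i, hi⟩) k) - a k) ^ 2
            / (θ k) ^ 2))
      = ∑ k : Fin d, ∫ y in S,
          w k * Real.exp (-((if hi : k = l then xl else y ⟨k, hi⟩) - a k) ^ 2 / θ k ^ 2) :=
        MeasureTheory.integral_finset_sum _ (fun k _ => hint k)
    _ = (∫ y in S,
          w l * Real.exp (-((if hi : l = l then xl else y ⟨l, hi⟩) - a l) ^ 2 / θ l ^ 2))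
        + ∑ k ∈ Finset.univ.erase l, ∫ y in S,
          w k * Real.exp (-((if hi : k = l then xl else y ⟨k, hi⟩) - a k) ^ 2 / θ k ^ 2) :=
        (Finset.add_sum_erase _ _ (Finset.mem_univ l)).symm
    _ = _ := by
        congr 1
        · simp only [eq_self_iff_true, dite_true]
          rw [MeasureTheory.setIntegral_const, smul_eq_mul, measureReal_def, hvol]
          ring
        · rw [Finset.mul_sum]
          refine Finset.sum_congr rfl fun k hk => ?_
          have hkl : k ≠ l := (Finset.mem_erase.mp hk).1
          simp only [dif_neg hkl]
          set k' : {j : Fin d // j ≠ l} := ⟨k, hkl⟩ with hk'def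
          have hpt : ∀ y : {j : Fin d // j ≠ l} → ℝ,
              w k * Real.exp (-(y k' - a k) ^ 2 / θ k ^ 2)
                = ∏ j : {j : Fin d // j ≠ l},
                    (if j = k' then w k * Real.exp (-(y j - a k) ^ 2 / θ k ^ 2) else 1) := by
            intro y
            rw [Finset.prod_ite_eq' Finset.univ k'
              (fun j => w k * Real.exp (-(y j - a k) ^ 2 / θ k ^ 2)),
              if_pos (Finset.mem_univ k')]
          have key := integral_pi_prod_aux
            (fun j : {j : Fin d // j ≠ l} => volume.restrict (Set.Icc (L j.1) (U j.1)))
            (fun j x => if j = k' then w k * Real.exp (-(x - a k) ^ 2 / θ k ^ 2) else 1)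
          rw [show (∫ y in S, w k * Real.exp (-(y k' - a k) ^ 2 / θ k ^ 2))
              = ∫ y, (∏ j : {j : Fin d // j ≠ l},
                  (if j = k' then w k * Real.exp (-(y j - a k) ^ 2 / θ k ^ 2) else 1))
                ∂(volume.restrict S) from by simp_rw [← hpt]]
          rw [hres, key, ← Finset.mul_prod_erase Finset.univ _ (Finset.mem_univ k')]
          have hfirst : (∫ x, (if k' = k' then w k * Real.exp (-(x - a k) ^ 2 / θ k ^ 2) else 1)
                ∂(volume.restrict (Set.Icc (L k'.1) (U k'.1))))
              = w k * (Real.sqrt Real.pi * θ k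
                  * (gaussCDF (a k) (θ k ^ 2 / 2) (U k) - gaussCDF (a k) (θ k ^ 2 / 2) (L k))) := by
            simp only [eq_self_iff_true, if_true, ite_true, hk'def]
            rw [MeasureTheory.integral_const_mul]
            rw [show (∫ x, Real.exp (-(x - a k) ^ 2 / θ k ^ 2)
                ∂(volume.restrict (Set.Icc (L k) (U k))))
              = Real.sqrt Real.pi * θ k
                  * (gaussCDF (a k) (θ k ^ 2 / 2) (U k) - gaussCDF (a k) (θ k ^ 2 / 2) (L k)) from
              gauss_icc (a k) (θ k) (L k) (U k) (hθ k) (hLU k).le]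
          have hrest : (∏ j ∈ Finset.univ.erase k',
                ∫ x, (if j = k' then w k * Real.exp (-(x - a k) ^ 2 / θ k ^ 2) else 1)
                  ∂(volume.restrict (Set.Icc (L j.1) (U j.1))))
              = ∏ j ∈ (Finset.univ.erase l).erase k, (U j - L j) := by
            rw [Finset.prod_congr rfl (fun j hj => ?_)]
            · exact prod_subtype_ne_erase hkl (fun j => U j - L j) (hUL k).ne'
            · have hjk : j ≠ k' := (Finset.mem_erase.mp hj).1
              simp only [if_neg hjk]
              rw [MeasureTheory.integral_const, measureReal_def, Measure.restrict_apply_univ, Real.volume_Icc,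
                ENNReal.toReal_ofReal (hUL j.1).le, smul_eq_mul, mul_one]
          rw [hfirst, hrest]
          ring
end

section
/- Let d ≥ 1 and X = ∏_{l=1}^d [L_l, U_l] ⊂ ℝ^d with L_l < U_l. Let h : X → ℝ be continuous with a unique minimizer x* = (x*_1, …, x*_d) ∈ X, and suppose h satisfies the first-order dominating condition: the set of minimizers of h over X equals the set of minimizers over X of x ↦ ∑_{l=1}^d m_l(x_l), where m_l(x_l) = ∫_{X_{−l}} h(x) dx_{−l}. Let φ : ℝ → ℝ be continuous and strictly monotone increasing, and set f = φ ∘ h. Let (g_n) be a sequence of continuous functions g_n : X → ℝ with sup_{x ∈ X} |h(x) − g_n(x)| → 0 as n → ∞, and for each n let x̂_n = (x̂_{n,1}, …, x̂_{n,d}) where x̂_{n,l} is any minimizer over [L_l, U_l] of the marginal mean x_l ↦ ∫_{X_{−l}} g_n(x) dx_{−l}. Then x̂_n → x*, h(x̂_n) → h(x*), and f(x̂_n) → f(x*). -/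
open MeasureTheory

/-- The rectangle `∏_{l} [L l, U l] ⊂ ℝ^d`. -/
def rect {d : ℕ} (L U : Fin d → ℝ) : Set (Fin d → ℝ) :=
  Set.univ.pi fun l => Set.Icc (L l) (U l)

/-- The `l`-th marginal mean function of `h : ℝ^d → ℝ` over the rectangle `∏ [L j, U j]`. -/
noncomputable def marginalMean {d : ℕ} (L U : Fin d → ℝ)
    (h : (Fin d → ℝ) → ℝ) (l : Fin d) (t : ℝ) : ℝ :=
  ∫ y in Set.univ.pi (fun j : {j : Fin d // j ≠ l} => Set.Icc (L j.1) (U j.1)),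
    h (fun i => if hi : i = l then t else y ⟨i, hi⟩)

namespace Stmt15Aux

variable {d : ℕ} (L U : Fin d → ℝ)

def S (l : Fin d) : Set ({j : Fin d // j ≠ l} → ℝ) :=
  Set.univ.pi fun j => Set.Icc (L j.1) (U j.1)

def emb {d : ℕ} (l : Fin d) (t : ℝ) (y : {j : Fin d // j ≠ l} → ℝ) : Fin d → ℝ :=
  fun i => if hi : i = l then t else y ⟨i, hi⟩

lemma mm_def (h : (Fin d → ℝ) → ℝ) (l : Fin d) (t : ℝ) :
    marginalMean L U h l t = ∫ y in S L U l, h (emb l t y) := rfl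

lemma emb_mem {l : Fin d} {t : ℝ} {y : {j : Fin d // j ≠ l} → ℝ}
    (ht : t ∈ Set.Icc (L l) (U l)) (hy : y ∈ S L U l) :
    emb l t y ∈ rect L U := by
  intro i _
  by_cases hi : i = l
  · subst hi; simpa [emb] using ht
  · simpa [emb, hi] using hy ⟨i, hi⟩ (Set.mem_univ _)

lemma emb_cont_t (l : Fin d) (y : {j : Fin d // j ≠ l} → ℝ) :
    Continuous fun t => emb l t y := by
  apply continuous_pi
  intro i
  by_cases hi : i = l <;> simp [emb, hi] <;> fun_prop

lemma emb_cont_y (l : Fin d) (t : ℝ) :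
    Continuous fun y : {j : Fin d // j ≠ l} → ℝ => emb l t y := by
  apply continuous_pi
  intro i
  by_cases hi : i = l <;> simp [emb, hi] <;> fun_prop

lemma S_meas (l : Fin d) : MeasurableSet (S L U l) :=
  MeasurableSet.univ_pi fun j => measurableSet_Icc

lemma S_compact (l : Fin d) : IsCompact (S L U l) :=
  isCompact_univ_pi fun j => isCompact_Icc

lemma S_vol (l : Fin d) : volume (S L U l) < ⊤ := by
  rw [S, volume_pi_pi]
  exact ENNReal.prod_lt_top fun j _ => measure_Icc_lt_top

lemma rect_compact : IsCompact (rect L U) := isCompact_univ_pi fun l => isCompact_Icc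

lemma integrand_contOn {h : (Fin d → ℝ) → ℝ} (hcont : ContinuousOn h (rect L U))
    {l : Fin d} {t : ℝ} (ht : t ∈ Set.Icc (L l) (U l)) :
    ContinuousOn (fun y => h (emb l t y)) (S L U l) :=
  hcont.comp (emb_cont_y l t).continuousOn fun y hy => emb_mem L U ht hy

lemma integrand_integrable {h : (Fin d → ℝ) → ℝ} (hcont : ContinuousOn h (rect L U))
    {l : Fin d} {t : ℝ} (ht : t ∈ Set.Icc (L l) (U l)) :
    IntegrableOn (fun y => h (emb l t y)) (S L U l) :=
  (integrand_contOn L U hcont ht).integrableOn_compact (S_compact L U l)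

lemma mm_contOn {h : (Fin d → ℝ) → ℝ} (hcont : ContinuousOn h (rect L U)) (l : Fin d) :
    ContinuousOn (marginalMean L U h l) (Set.Icc (L l) (U l)) := by
  obtain ⟨C, hC⟩ := (rect_compact L U).exists_bound_of_continuousOn hcont
  have hdef : marginalMean L U h l = fun t => ∫ y in S L U l, h (emb l t y) := rfl
  rw [hdef]
  apply continuousOn_of_dominated (bound := fun _ => C)
  · exact fun t ht =>
      ((integrand_contOn L U hcont ht).aestronglyMeasurable (S_meas L U l))
  · intro t ht
    filter_upwards [ae_restrict_mem (S_meas L U l)] with y hy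
    exact hC _ (emb_mem L U ht hy)
  · exact integrableOn_const (S_vol L U l).ne
  · filter_upwards [ae_restrict_mem (S_meas L U l)] with y hy
    exact hcont.comp (emb_cont_t l y).continuousOn fun t ht => emb_mem L U ht hy

lemma mm_close {h g : (Fin d → ℝ) → ℝ} (hcont : ContinuousOn h (rect L U))
    (hgcont : ContinuousOn g (rect L U)) {e : ℝ} (he : ∀ x ∈ rect L U, |h x - g x| ≤ e)
    {l : Fin d} {t : ℝ} (ht : t ∈ Set.Icc (L l) (U l)) :
    |marginalMean L U h l t - marginalMean L U g l t| ≤ e * (volume (S L U l)).toReal := by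
  rw [mm_def, mm_def, ← integral_sub (integrand_integrable L U hcont ht)
    (integrand_integrable L U hgcont ht)]
  rw [← Real.norm_eq_abs]
  apply norm_setIntegral_le_of_norm_le_const (S_vol L U l)
  · intro y hy
    rw [Real.norm_eq_abs]
    exact he _ (emb_mem L U ht hy)

end Stmt15Aux

namespace Stmt15Aux

lemma mm_uniq {d : ℕ} (L U : Fin d → ℝ) {h : (Fin d → ℝ) → ℝ}
    {xstar : Fin d → ℝ} (hxstar : xstar ∈ rect L U)
    (hmin : ∀ x ∈ rect L U, h xstar ≤ h x)
    (huniq : ∀ x ∈ rect L U, x ≠ xstar → h xstar < h x)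
    (hFOD : {x | x ∈ rect L U ∧ ∀ y ∈ rect L U, h x ≤ h y} =
      {x | x ∈ rect L U ∧ ∀ y ∈ rect L U,
        (∑ l, marginalMean L U h l (x l)) ≤ ∑ l, marginalMean L U h l (y l)})
    {l : Fin d} {t : ℝ} (ht : t ∈ Set.Icc (L l) (U l)) (htne : t ≠ xstar l) :
    marginalMean L U h l (xstar l) < marginalMean L U h l t := by
  have hxM : xstar ∈ {x | x ∈ rect L U ∧ ∀ y ∈ rect L U,
      (∑ l, marginalMean L U h l (x l)) ≤ ∑ l, marginalMean L U h l (y l)} := by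
    rw [← hFOD]; exact ⟨hxstar, hmin⟩
  set y := Function.update xstar l t with hy
  have hymem : y ∈ rect L U := by
    intro j _
    by_cases hj : j = l
    · subst hj; simpa [hy, Function.update_self] using ht
    · simpa [hy, Function.update_of_ne hj] using hxstar j (Set.mem_univ j)
  have hsy : (∑ j, marginalMean L U h j (y j)) =
      marginalMean L U h l t + ∑ j ∈ Finset.univ.erase l, marginalMean L U h j (xstar j) := by
    rw [← Finset.add_sum_erase _ _ (Finset.mem_univ l)]
    congr 1
    · simp [hy]
    · exact Finset.sum_congr rfl fun j hj =>
        by rw [hy, Function.update_of_ne (Finset.ne_of_mem_erase hj)]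
  have hsx : (∑ j, marginalMean L U h j (xstar j)) =
      marginalMean L U h l (xstar l) + ∑ j ∈ Finset.univ.erase l,
        marginalMean L U h j (xstar j) := by
    rw [← Finset.add_sum_erase _ _ (Finset.mem_univ l)]
  have hle : marginalMean L U h l (xstar l) ≤ marginalMean L U h l t := by
    have := hxM.2 y hymem
    rw [hsy, hsx] at this
    linarith
  rcases lt_or_eq_of_le hle with hlt | heq
  · exact hlt
  · exfalso
    have hyM : y ∈ {x | x ∈ rect L U ∧ ∀ z ∈ rect L U,
        (∑ l, marginalMean L U h l (x l)) ≤ ∑ l, marginalMean L U h l (z l)} := by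
      refine ⟨hymem, fun z hz => ?_⟩
      have h1 := hxM.2 z hz
      rw [hsy, ← heq, ← hsx]
      exact h1
    rw [← hFOD] at hyM
    have hyne : y ≠ xstar := by
      intro hcon
      apply htne
      have := congrFun hcon l
      simpa [hy] using this
    exact absurd (hyM.2 xstar hxstar) (not_le.mpr (huniq y hymem hyne))

end Stmt15Aux

open Stmt15Aux

/-- deterministic core of Theorem 4, consistency of BOMM: Let `h` be
continuous on `X = ∏ [L l, U l]` with unique minimizer `x*` satisfying the first-order
dominating condition, let `φ` be continuous and strictly increasing, `f = φ ∘ h`, and let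
`g n` be continuous approximants of `h` with uniform error `ε n → 0` on `X`. If
`x̂ n ∈ X` has each coordinate `x̂ n l` minimizing the `l`-th marginal mean of `g n` over
`[L l, U l]`, then `x̂ n → x*`, `h (x̂ n) → h x*` and `f (x̂ n) → f x*`. -/
theorem stmt15 (d : ℕ) (hd : 1 ≤ d) (L U : Fin d → ℝ) (hLU : ∀ l, L l < U l)
    (h : (Fin d → ℝ) → ℝ) (hcont : ContinuousOn h (rect L U))
    (xstar : Fin d → ℝ) (hxstar : xstar ∈ rect L U)
    (hmin : ∀ x ∈ rect L U, h xstar ≤ h x)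
    (huniq : ∀ x ∈ rect L U, x ≠ xstar → h xstar < h x)
    (hFOD : {x | x ∈ rect L U ∧ ∀ y ∈ rect L U, h x ≤ h y} =
      {x | x ∈ rect L U ∧ ∀ y ∈ rect L U,
        (∑ l, marginalMean L U h l (x l)) ≤ ∑ l, marginalMean L U h l (y l)})
    (φ : ℝ → ℝ) (hφc : Continuous φ) (hφm : StrictMono φ)
    (g : ℕ → (Fin d → ℝ) → ℝ) (hgcont : ∀ n, ContinuousOn (g n) (rect L U))
    (ε : ℕ → ℝ) (hgε : ∀ n, ∀ x ∈ rect L U, |h x - g n x| ≤ ε n)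
    (hε : Filter.Tendsto ε Filter.atTop (nhds 0))
    (xhat : ℕ → Fin d → ℝ) (hxhatmem : ∀ n, xhat n ∈ rect L U)
    (hxhatmin : ∀ n, ∀ l, ∀ t ∈ Set.Icc (L l) (U l),
      marginalMean L U (g n) l (xhat n l) ≤ marginalMean L U (g n) l t) :
    Filter.Tendsto xhat Filter.atTop (nhds xstar) ∧
    Filter.Tendsto (fun n => h (xhat n)) Filter.atTop (nhds (h xstar)) ∧
    Filter.Tendsto (fun n => φ (h (xhat n))) Filter.atTop (nhds (φ (h xstar))) := by
  have hkey : Filter.Tendsto xhat Filter.atTop (nhds xstar) := by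
    rw [tendsto_pi_nhds]
    intro l
    set V := (volume (S L U l)).toReal with hVdef
    set m := marginalMean L U h l with hm
    have hxsl : xstar l ∈ Set.Icc (L l) (U l) := hxstar l (Set.mem_univ l)
    have hmc : ContinuousOn m (Set.Icc (L l) (U l)) := mm_contOn L U hcont l
    have hclose : ∀ n, ∀ t ∈ Set.Icc (L l) (U l),
        |m t - marginalMean L U (g n) l t| ≤ ε n * V :=
      fun n t ht => mm_close L U hcont (hgcont n) (hgε n) ht
    have hxhl : ∀ n, xhat n l ∈ Set.Icc (L l) (U l) := fun n => hxhatmem n l (Set.mem_univ l)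
    have hnear : ∀ n, m (xhat n l) ≤ m (xstar l) + 2 * (ε n * V) := by
      intro n
      have h1 := abs_sub_le_iff.1 (hclose n _ (hxhl n))
      have h2 := abs_sub_le_iff.1 (hclose n _ hxsl)
      have h3 := hxhatmin n l (xstar l) hxsl
      linarith [h1.1, h2.2]
    have hεV : Filter.Tendsto (fun n => 2 * (ε n * V)) Filter.atTop (nhds 0) := by
      have := (hε.mul_const V).const_mul 2
      simpa using this
    rw [Metric.tendsto_atTop]
    intro δ hδ
    set K := Set.Icc (L l) (U l) ∩ {t | δ ≤ dist t (xstar l)} with hK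
    by_cases hKne : K.Nonempty
    · have hKcomp : IsCompact K :=
        isCompact_Icc.inter_right (isClosed_le continuous_const
          (continuous_id.dist continuous_const))
      obtain ⟨t0, ht0K, ht0min⟩ := hKcomp.exists_isMinOn hKne
        (hmc.mono Set.inter_subset_left)
      have ht0ne : t0 ≠ xstar l := by
        intro hcon
        have := ht0K.2
        rw [hcon] at this
        simp at this
        linarith
      have hγ : m (xstar l) < m t0 :=
        mm_uniq L U hxstar hmin huniq hFOD ht0K.1 ht0ne
      have hev : ∀ᶠ n in Filter.atTop, 2 * (ε n * V) < m t0 - m (xstar l) :=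
        hεV.eventually_lt_const (by linarith)
      obtain ⟨N, hN⟩ := Filter.eventually_atTop.1 hev
      refine ⟨N, fun n hn => ?_⟩
      by_contra hcon
      have hmemK : xhat n l ∈ K := ⟨hxhl n, not_lt.1 hcon⟩
      have := ht0min hmemK
      have := hnear n
      have := hN n hn
      simp only [IsMinOn, IsMinFilter] at ht0min
      have h4 : m t0 ≤ m (xhat n l) := ht0min hmemK
      linarith
    · refine ⟨0, fun n _ => ?_⟩
      by_contra hcon
      exact hKne ⟨xhat n l, hxhl n, not_lt.1 hcon⟩
  have hwithin : Filter.Tendsto xhat Filter.atTop (nhdsWithin xstar (rect L U)) :=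
    tendsto_nhdsWithin_iff.2 ⟨hkey, Filter.Eventually.of_forall hxhatmem⟩
  have hh : Filter.Tendsto (fun n => h (xhat n)) Filter.atTop (nhds (h xstar)) :=
    (hcont xstar hxstar).tendsto.comp hwithin
  exact ⟨hkey, hh, (hφc.tendsto _).comp hh⟩
end

section
/- Let d ≥ 1 and X = ∏_{l=1}^d [L_l, U_l] ⊂ ℝ^d with L_l < U_l. Let h : X → ℝ be continuous with a unique minimizer x* ∈ X satisfying the first-order dominating condition (the set of minimizers of h over X equals the set of minimizers over X of x ↦ ∑_{l=1}^d ∫_{X_{−l}} h(x) dx_{−l}), let φ : ℝ → ℝ be continuous and strictly monotone increasing, and set f = φ ∘ h. Let g_n : X → ℝ be continuous with sup_{x ∈ X} |h(x) − g_n(x)| → 0, let x̂_n be the point whose l-th coordinate minimizes x_l ↦ ∫_{X_{−l}} g_n(x) dx_{−l} over [L_l, U_l], and let (a_n) be any sequence of points in X satisfying g_n(a_n) ≤ g_n(x̂_n) for all n. Then h(a_n) → h(x*) and f(a_n) → f(x*). -/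
open MeasureTheory

namespace Stmt16Aux

variable {d : ℕ} (L U : Fin d → ℝ)

def box (l : Fin d) : Set ({j : Fin d // j ≠ l} → ℝ) :=
  Set.univ.pi fun j => Set.Icc (L j.1) (U j.1)

def emb (l : Fin d) (t : ℝ) (y : {j : Fin d // j ≠ l} → ℝ) : Fin d → ℝ :=
  fun i => if hi : i = l then t else y ⟨i, hi⟩

lemma marginalMean_eq (h : (Fin d → ℝ) → ℝ) (l : Fin d) (t : ℝ) :
    marginalMean L U h l t = ∫ y in box L U l, h (emb l t y) := rfl

lemma isCompact_box (l : Fin d) : IsCompact (box L U l) :=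
  isCompact_univ_pi fun _ => isCompact_Icc

lemma measurableSet_box (l : Fin d) : MeasurableSet (box L U l) :=
  MeasurableSet.univ_pi fun _ => measurableSet_Icc

lemma isCompact_rect : IsCompact (rect L U) :=
  isCompact_univ_pi fun _ => isCompact_Icc

lemma isClosed_rect : IsClosed (rect L U) :=
  isClosed_set_pi fun _ _ => isClosed_Icc

lemma emb_mem_rect {l : Fin d} {t : ℝ} {y : {j : Fin d // j ≠ l} → ℝ}
    (ht : t ∈ Set.Icc (L l) (U l)) (hy : y ∈ box L U l) :
    emb l t y ∈ rect L U := by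
  intro i _
  by_cases hi : i = l
  · subst hi; simpa [emb] using ht
  · simpa [emb, hi] using hy ⟨i, hi⟩ (Set.mem_univ _)

lemma continuous_emb_t (l : Fin d) (y : {j : Fin d // j ≠ l} → ℝ) :
    Continuous fun t => emb l t y := by
  apply continuous_pi; intro i
  by_cases hi : i = l
  · simpa [emb, hi] using continuous_id'
  · simpa [emb, hi] using continuous_const

lemma continuous_emb_y (l : Fin d) (t : ℝ) :
    Continuous fun y : {j : Fin d // j ≠ l} → ℝ => emb l t y := by
  apply continuous_pi; intro i
  by_cases hi : i = l
  · simpa [emb, hi] using continuous_const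
  · simpa [emb, hi] using continuous_apply (⟨i, hi⟩ : {j : Fin d // j ≠ l})

variable {L U}

lemma integrableOn_comp {h : (Fin d → ℝ) → ℝ} (hcont : ContinuousOn h (rect L U))
    {l : Fin d} {t : ℝ} (ht : t ∈ Set.Icc (L l) (U l)) :
    IntegrableOn (fun y => h (emb l t y)) (box L U l) := by
  apply ContinuousOn.integrableOn_compact (isCompact_box L U l)
  exact hcont.comp (continuous_emb_y l t).continuousOn
    (fun y hy => emb_mem_rect L U ht hy)

/-- uniform error transfers to marginal means. -/
lemma marginalMean_sub_le {h g : (Fin d → ℝ) → ℝ}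
    (hcont : ContinuousOn h (rect L U)) (hgcont : ContinuousOn g (rect L U))
    {e : ℝ} (hbd : ∀ x ∈ rect L U, |h x - g x| ≤ e)
    {l : Fin d} {t : ℝ} (ht : t ∈ Set.Icc (L l) (U l)) :
    |marginalMean L U h l t - marginalMean L U g l t| ≤
      e * (volume (box L U l)).toReal := by
  rw [marginalMean_eq, marginalMean_eq,
    ← integral_sub (integrableOn_comp hcont ht) (integrableOn_comp hgcont ht)]
  rw [← Real.norm_eq_abs]
  have hm : AEStronglyMeasurable (fun y => h (emb l t y) - g (emb l t y))
      (volume.restrict (box L U l)) :=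
    ((integrableOn_comp hcont ht).sub (integrableOn_comp hgcont ht)).aestronglyMeasurable
  exact norm_setIntegral_le_of_norm_le_const ((isCompact_box L U l).measure_lt_top)
    (fun y hy => by rw [Real.norm_eq_abs]; exact hbd _ (emb_mem_rect L U ht hy))

lemma continuousOn_marginalMean {h : (Fin d → ℝ) → ℝ}
    (hcont : ContinuousOn h (rect L U)) (l : Fin d) :
    ContinuousOn (marginalMean L U h l) (Set.Icc (L l) (U l)) := by
  obtain ⟨C, hC⟩ := (isCompact_rect L U).exists_bound_of_continuousOn hcont
  have hbox := measurableSet_box L U l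
  apply MeasureTheory.continuousOn_of_dominated (bound := fun _ => C)
    (μ := volume.restrict (box L U l))
  · intro t ht
    exact (hcont.comp (continuous_emb_y l t).continuousOn
      (fun y hy => emb_mem_rect L U ht hy)).aestronglyMeasurable hbox
  · intro t ht
    rw [ae_restrict_iff' hbox]
    exact Filter.Eventually.of_forall fun y hy => hC _ (emb_mem_rect L U ht hy)
  · rw [integrable_const_iff]
    right
    constructor
    rw [Measure.restrict_apply_univ]
    exact (isCompact_box L U l).measure_lt_top
  · rw [ae_restrict_iff' hbox]
    refine Filter.Eventually.of_forall fun y hy => ?_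
    exact hcont.comp (continuous_emb_t l y).continuousOn
      (fun t ht => emb_mem_rect L U ht hy)

end Stmt16Aux

open Stmt16Aux

/-- deterministic core of Corollary 1, consistency of BOMM+: With `h`, `x*`,
the first-order dominating condition, `φ`, `f = φ ∘ h`, approximants `g n` with uniform error
`ε n → 0`, and BOMM points `x̂ n` as in Statement 15, any sequence `a n ∈ X` with
`g n (a n) ≤ g n (x̂ n)` satisfies `h (a n) → h x*` and `f (a n) → f x*`. -/
theorem stmt16 (d : ℕ) (hd : 1 ≤ d) (L U : Fin d → ℝ) (hLU : ∀ l, L l < U l)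
    (h : (Fin d → ℝ) → ℝ) (hcont : ContinuousOn h (rect L U))
    (xstar : Fin d → ℝ) (hxstar : xstar ∈ rect L U)
    (hmin : ∀ x ∈ rect L U, h xstar ≤ h x)
    (huniq : ∀ x ∈ rect L U, x ≠ xstar → h xstar < h x)
    (hFOD : {x | x ∈ rect L U ∧ ∀ y ∈ rect L U, h x ≤ h y} =
      {x | x ∈ rect L U ∧ ∀ y ∈ rect L U,
        (∑ l, marginalMean L U h l (x l)) ≤ ∑ l, marginalMean L U h l (y l)})
    (φ : ℝ → ℝ) (hφc : Continuous φ) (hφm : StrictMono φ)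
    (g : ℕ → (Fin d → ℝ) → ℝ) (hgcont : ∀ n, ContinuousOn (g n) (rect L U))
    (ε : ℕ → ℝ) (hgε : ∀ n, ∀ x ∈ rect L U, |h x - g n x| ≤ ε n)
    (hε : Filter.Tendsto ε Filter.atTop (nhds 0))
    (xhat : ℕ → Fin d → ℝ) (hxhatmem : ∀ n, xhat n ∈ rect L U)
    (hxhatmin : ∀ n, ∀ l, ∀ t ∈ Set.Icc (L l) (U l),
      marginalMean L U (g n) l (xhat n l) ≤ marginalMean L U (g n) l t)
    (a : ℕ → Fin d → ℝ) (hamem : ∀ n, a n ∈ rect L U)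
    (ha : ∀ n, g n (a n) ≤ g n (xhat n)) :
    Filter.Tendsto (fun n => h (a n)) Filter.atTop (nhds (h xstar)) ∧
    Filter.Tendsto (fun n => φ (h (a n))) Filter.atTop (nhds (φ (h xstar))) := by
  set m : (Fin d → ℝ) → ℝ := fun x => ∑ l, marginalMean L U h l (x l) with hm
  set V : ℝ := ∑ l, (volume (box L U l)).toReal with hV
  have hε0 : ∀ n, 0 ≤ ε n := fun n => le_trans (abs_nonneg _) (hgε n xstar hxstar)
  have hmemcoord : ∀ x ∈ rect L U, ∀ l, x l ∈ Set.Icc (L l) (U l) :=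
    fun x hx l => hx l (Set.mem_univ l)
  -- continuity of m on rect
  have hmc : ContinuousOn m (rect L U) := by
    apply continuousOn_finset_sum
    intro l _
    exact (continuousOn_marginalMean hcont l).comp (continuous_apply l).continuousOn
      (fun x hx => hmemcoord x hx l)
  -- xstar minimizes m
  have hxstar_m : ∀ y ∈ rect L U, m xstar ≤ m y := by
    have : xstar ∈ {x | x ∈ rect L U ∧ ∀ y ∈ rect L U, h x ≤ h y} := ⟨hxstar, hmin⟩
    rw [hFOD] at this
    exact this.2
  -- strict minimality of m at xstar
  have huniq_m : ∀ z ∈ rect L U, z ≠ xstar → m xstar < m z := by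
    intro z hz hzne
    by_contra hle
    push_neg at hle
    have hzmem : z ∈ {x | x ∈ rect L U ∧ ∀ y ∈ rect L U,
        (∑ l, marginalMean L U h l (x l)) ≤ ∑ l, marginalMean L U h l (y l)} :=
      ⟨hz, fun y hy => le_trans hle (hxstar_m y hy)⟩
    rw [← hFOD] at hzmem
    exact absurd (hzmem.2 xstar hxstar) (not_le.2 (huniq z hz hzne))
  -- key bound : m (xhat n) ≤ m xstar + 2 * ε n * V
  have hkey : ∀ n, m (xhat n) ≤ m xstar + 2 * ε n * V := by
    intro n
    have step : ∀ l, marginalMean L U h l (xhat n l) ≤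
        marginalMean L U h l (xstar l) + 2 * ε n * (volume (box L U l)).toReal := by
      intro l
      have b1 := abs_le.1 (marginalMean_sub_le hcont (hgcont n) (hgε n)
        (hmemcoord _ (hxhatmem n) l))
      have b2 := abs_le.1 (marginalMean_sub_le hcont (hgcont n) (hgε n)
        (hmemcoord _ hxstar l))
      have b3 := hxhatmin n l (xstar l) (hmemcoord _ hxstar l)
      have := b1.2; have := b2.1
      linarith
    calc m (xhat n) ≤ ∑ l, (marginalMean L U h l (xstar l)
          + 2 * ε n * (volume (box L U l)).toReal) :=
        Finset.sum_le_sum fun l _ => step l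
      _ = m xstar + 2 * ε n * V := by
        rw [Finset.sum_add_distrib, ← Finset.mul_sum]
  have htendm : Filter.Tendsto (fun n => m xstar + 2 * ε n * V)
      Filter.atTop (nhds (m xstar)) := by
    have : Filter.Tendsto (fun n => 2 * ε n * V) Filter.atTop (nhds 0) := by
      have := (hε.const_mul 2).mul_const V
      simpa using this
    simpa using (tendsto_const_nhds.add this)
  -- eventual bound on h (xhat n)
  have hevent : ∀ δ : ℝ, 0 < δ → ∀ᶠ n in Filter.atTop, h (xhat n) < h xstar + δ := by
    intro δ hδ
    set K : Set (Fin d → ℝ) := rect L U ∩ h ⁻¹' Set.Ici (h xstar + δ) with hK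
    have hKc : IsCompact K :=
      (isCompact_rect L U).of_isClosed_subset
        (hcont.preimage_isClosed_of_isClosed (isClosed_rect L U) isClosed_Ici)
        Set.inter_subset_left
    by_cases hKne : K.Nonempty
    · obtain ⟨z, hzK, hzmin⟩ := hKc.exists_isMinOn hKne (hmc.mono Set.inter_subset_left)
      have hzne : z ≠ xstar := by
        intro hzeq
        have := hzK.2
        rw [hzeq] at this
        simp only [Set.mem_preimage, Set.mem_Ici] at this
        linarith
      have hclt : m xstar < m z := huniq_m z hzK.1 hzne
      filter_upwards [htendm.eventually_lt_const hclt] with n hn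
      by_contra hcon
      push_neg at hcon
      have hmem : xhat n ∈ K := ⟨hxhatmem n, hcon⟩
      exact absurd (le_trans (hzmin hmem) (hkey n)) (not_le.2 hn)
    · refine Filter.Eventually.of_forall fun n => ?_
      by_contra hcon
      push_neg at hcon
      exact hKne ⟨xhat n, hxhatmem n, hcon⟩
  have htendxhat : Filter.Tendsto (fun n => h (xhat n)) Filter.atTop (nhds (h xstar)) := by
    rw [tendsto_order]
    constructor
    · intro c hc
      exact Filter.Eventually.of_forall fun n => lt_of_lt_of_le hc (hmin _ (hxhatmem n))
    · intro c hc
      have := hevent (c - h xstar) (by linarith)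
      filter_upwards [this] with n hn
      linarith
  have hub : ∀ n, h (a n) ≤ h (xhat n) + 2 * ε n := by
    intro n
    have b1 := (abs_le.1 (hgε n (a n) (hamem n))).2
    have b2 := (abs_le.1 (hgε n (xhat n) (hxhatmem n))).1
    have := ha n
    linarith
  have htendub : Filter.Tendsto (fun n => h (xhat n) + 2 * ε n)
      Filter.atTop (nhds (h xstar)) := by
    have h2 : Filter.Tendsto (fun n => 2 * ε n) Filter.atTop (nhds 0) := by
      simpa using hε.const_mul 2
    simpa using htendxhat.add h2
  have hmain : Filter.Tendsto (fun n => h (a n)) Filter.atTop (nhds (h xstar)) :=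
    tendsto_of_tendsto_of_tendsto_of_le_of_le tendsto_const_nhds htendub
      (fun n => hmin _ (hamem n)) hub
  exact ⟨hmain, (hφc.tendsto _).comp hmain⟩
end
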